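/- Sufficient optimality for the third-order linear problem (PTL) (Theorem 3.2). Let A be a real n×n matrix, B a real n×r matrix, U ⊆ ℝ^r nonempty convex and compact, f : ℝⁿ × ℝⁿ → ℝ convex, S ⊆ ℝⁿ × ℝⁿ convex, and X(t) ⊆ ℝⁿ convex for each t ∈ [0,T]. A feasible pair is (x, u) with u : [0,T] → ℝ^r measurable, u(t) ∈ U for all t, x twice differentiable with x''(t) = x''(0) + ∫₀ᵗ v(s)ds on [0,T] for an integrable v with v(t) = A x(t) + B u(t) a.e., (x^{(j)}(0), x^{(j)}(T)) ∈ S for j = 0,1,2, and x(t) ∈ X(t) for all t ∈ [0,T]. Let (x̃, ũ) be a feasible pair and suppose x* : ℝ → ℝⁿ is twice differentiable with x*''(t) = x*''(0) + ∫₀ᵗ w(s)ds on [0,T] for an integrable w, and v* : [0,T] → ℝⁿ satisfies for a.e. t ∈ [0,T]: ⟨y − x̃(t), v*(t)⟩ ≥ 0 for all y ∈ X(t), −w(t) = Aᵀ x*(t) + v*(t), and ⟨B ũ(t), x*(t)⟩ = sup_{u ∈ U} ⟨B u, x*(t)⟩. Suppose further there exist p ∈ ∂f(x̃(0), x̃(T))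 and μ* ∈ K_S*(x̃(0), x̃(T)) with (x*''(0), −x*''(T)) = p − μ*, and ((−1)^{j+1} x*^{(j)}(0), (−1)^j x*^{(j)}(T)) ∈ K_S*(x̃^{(2−j)}(0), x̃^{(2−j)}(T)) for j = 0,1. Then f(x(0), x(T)) ≥ f(x̃(0), x̃(T)) for every feasible pair (x, u). -/

import Mathlib

open MeasureTheory Matrix Set


section Aux

/-- Integration by parts where one factor is `c + ∫₀ᵗ g` with `g` merely integrable
and the other is `C¹`. -/
lemma ibp_scalar (T : ℝ) (hT : 0 ≤ T) (c : ℝ) (g φ φ' : ℝ → ℝ)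
    (hg : IntervalIntegrable g volume 0 T)
    (hφ : ∀ t, HasDerivAt φ (φ' t) t) (hφ' : Continuous φ') :
    (c + ∫ s in (0:ℝ)..T, g s) * φ T - c * φ 0
      = ∫ t in (0:ℝ)..T, (g t * φ t + (c + ∫ s in (0:ℝ)..t, g s) * φ' t) := by
  set G : ℝ → ℝ := fun t => c + ∫ s in (0:ℝ)..t, g s with hGdef
  have φcont : Continuous φ := continuous_iff_continuousAt.2 fun t => (hφ t).continuousAt
  have hgφ : IntervalIntegrable (fun t => g t * φ t) volume 0 T :=
    hg.mul_continuousOn φcont.continuousOn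
  have hGcont : ContinuousOn G (Icc 0 T) := by
    have h1 := intervalIntegral.continuousOn_primitive_interval' hg
      (left_mem_uIcc (a := (0:ℝ)) (b := T))
    rw [uIcc_of_le hT] at h1
    exact continuousOn_const.add h1
  have hPcont : ContinuousOn (fun t => ∫ s in (0:ℝ)..t, g s * φ s) (Icc 0 T) := by
    have h1 := intervalIntegral.continuousOn_primitive_interval' hgφ
      (left_mem_uIcc (a := (0:ℝ)) (b := T))
    rwa [uIcc_of_le hT] at h1
  have hDcont : ContinuousOn (fun t => G t * φ t - ∫ s in (0:ℝ)..t, g s * φ s) (Icc 0 T) :=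
    (hGcont.mul φcont.continuousOn).sub hPcont
  have hsub : ∀ t ∈ Ioo (0:ℝ) T, uIcc 0 t ⊆ uIcc 0 T := by
    intro t ht
    rw [uIcc_of_le hT]
    exact Set.ordConnected_Icc.uIcc_subset ⟨le_rfl, hT⟩ (Ioo_subset_Icc_self ht)
  have hD : ∀ t₀ ∈ Ioo (0:ℝ) T,
      HasDerivAt (fun t => G t * φ t - ∫ s in (0:ℝ)..t, g s * φ s) (G t₀ * φ' t₀) t₀ := by
    intro t₀ ht₀
    have hsub2 : ∀ t ∈ Ioo (0:ℝ) T, uIcc t₀ t ⊆ uIcc 0 T := by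
      intro t ht
      rw [uIcc_of_le hT]
      exact Set.ordConnected_Icc.uIcc_subset (Ioo_subset_Icc_self ht₀) (Ioo_subset_Icc_self ht)
    rw [hasDerivAt_iff_isLittleO]
    have hmain : (fun t => G t₀ * (φ t - φ t₀ - (t - t₀) * φ' t₀)) =o[nhds t₀] fun t => t - t₀ := by
      have h1 := hasDerivAt_iff_isLittleO.1 (hφ t₀)
      simpa [smul_eq_mul] using h1.const_mul_left (G t₀)
    have hrem : (fun t => ∫ s in t₀..t, g s * (φ t - φ s)) =o[nhds t₀] fun t => t - t₀ := by
      rw [Asymptotics.isLittleO_iff]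
      intro ε hε
      set C : ℝ := |φ' t₀| + 1 with hCdef
      have hCpos : 0 < C := by positivity
      have h1 : ∀ᶠ s in nhds t₀, |φ' s| ≤ C := by
        have h2 : ∀ᶠ s in nhds t₀, dist (φ' s) (φ' t₀) < 1 :=
          Metric.tendsto_nhds.1 (hφ'.continuousAt (x := t₀)) 1 one_pos
        filter_upwards [h2] with s hs
        rw [Real.dist_eq] at hs
        have := abs_sub_abs_le_abs_sub (φ' s) (φ' t₀)
        simp only [hCdef]; linarith
      obtain ⟨δ, hδpos, hδ⟩ := Metric.eventually_nhds_iff_ball.1 h1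
      have hlip : ∀ s ∈ Metric.ball t₀ δ, ∀ t ∈ Metric.ball t₀ δ, |φ t - φ s| ≤ C * |t - s| := by
        intro s hs t ht
        have := Convex.norm_image_sub_le_of_norm_hasDerivWithin_le
          (f := φ) (f' := φ') (s := Metric.ball t₀ δ)
          (fun y _ => (hφ y).hasDerivWithinAt)
          (fun y hy => by simpa [Real.norm_eq_abs] using hδ y hy)
          (convex_ball t₀ δ) hs ht
        simpa [Real.norm_eq_abs] using this
      set gA : ℝ → ℝ := fun s => |g s| with hgAdef
      have hgabs : IntervalIntegrable gA volume 0 T := hg.abs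
      have ht₀mem : t₀ ∈ uIcc (0:ℝ) T := by
        rw [uIcc_of_le hT]; exact Ioo_subset_Icc_self ht₀
      have hPc : Filter.Tendsto (fun t => ∫ s in t₀..t, gA s) (nhds t₀) (nhds 0) := by
        have hcont := intervalIntegral.continuousOn_primitive_interval' hgabs ht₀mem
        have hat : ContinuousAt (fun t => ∫ s in t₀..t, gA s) t₀ := by
          apply hcont.continuousAt
          rw [uIcc_of_le hT]
          exact Icc_mem_nhds ht₀.1 ht₀.2
        simpa [intervalIntegral.integral_same] using hat.tendsto
      have hsmall : ∀ᶠ t in nhds t₀, |∫ s in t₀..t, gA s| ≤ ε / C := by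
        have h5 : ∀ᶠ t in nhds t₀, dist (∫ s in t₀..t, gA s) 0 < ε / C :=
          Metric.tendsto_nhds.1 hPc _ (by positivity)
        filter_upwards [h5] with t ht
        rw [Real.dist_eq, sub_zero] at ht
        exact ht.le
      filter_upwards [isOpen_Ioo.mem_nhds ht₀, Metric.ball_mem_nhds t₀ hδpos, hsmall]
        with t htI htb hts
      have hballsub : uIcc t₀ t ⊆ Metric.ball t₀ δ :=
        (convex_ball t₀ δ).ordConnected.uIcc_subset (Metric.mem_ball_self hδpos) htb
      have hper : ∀ s ∈ Set.uIoc t₀ t, ‖g s * (φ t - φ s)‖ ≤ gA s * (C * |t - t₀|) := by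
        intro s hs
        have hsmem : s ∈ Metric.ball t₀ δ := hballsub (uIoc_subset_uIcc hs)
        have hts' : |t - s| ≤ |t - t₀| := by
          rcases Set.mem_uIoc.1 hs with ⟨h1, h2⟩ | ⟨h1, h2⟩
          · rw [abs_of_nonneg (by linarith), abs_of_nonneg (by linarith)]; linarith
          · rw [abs_of_nonpos (by linarith), abs_of_nonpos (by linarith)]; linarith
        have h3 : |φ t - φ s| ≤ C * |t - s| := hlip s hsmem t htb
        have h4 : |φ t - φ s| ≤ C * |t - t₀| :=
          h3.trans (mul_le_mul_of_nonneg_left hts' hCpos.le)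
        rw [Real.norm_eq_abs, abs_mul]
        exact mul_le_mul_of_nonneg_left h4 (abs_nonneg _)
      clear hδ
      have hbint : IntervalIntegrable (fun s => gA s * (C * |t - t₀|)) volume t₀ t :=
        (hgabs.mono_set (hsub2 t htI)).mul_const _
      calc ‖∫ s in t₀..t, g s * (φ t - φ s)‖
          ≤ |∫ s in t₀..t, gA s * (C * |t - t₀|)| := by
            apply intervalIntegral.norm_integral_le_abs_of_norm_le _ hbint
            exact (ae_restrict_iff' measurableSet_uIoc).2 (Filter.Eventually.of_forall hper)
        _ = |∫ s in t₀..t, gA s| * (C * |t - t₀|) := by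
            rw [intervalIntegral.integral_mul_const, abs_mul,
              abs_of_nonneg (by positivity : (0:ℝ) ≤ C * |t - t₀|)]
        _ ≤ (ε / C) * (C * |t - t₀|) := by
            apply mul_le_mul_of_nonneg_right hts (by positivity)
        _ = ε * ‖t - t₀‖ := by
            rw [Real.norm_eq_abs]; field_simp
    refine ((hmain.add hrem).congr' (Filter.EventuallyEq.symm ?_) Filter.EventuallyEq.rfl)
    filter_upwards [isOpen_Ioo.mem_nhds ht₀] with t ht
    have hg0t : IntervalIntegrable g volume 0 t := hg.mono_set (hsub t ht)
    have hg0t₀ : IntervalIntegrable g volume 0 t₀ := hg.mono_set (hsub t₀ ht₀)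
    have hgφ0t : IntervalIntegrable (fun s => g s * φ s) volume 0 t := hgφ.mono_set (hsub t ht)
    have hgφ0t₀ : IntervalIntegrable (fun s => g s * φ s) volume 0 t₀ :=
      hgφ.mono_set (hsub t₀ ht₀)
    have hgt : IntervalIntegrable g volume t₀ t :=
      hg.mono_set (by
        rw [uIcc_of_le hT]
        exact Set.ordConnected_Icc.uIcc_subset (Ioo_subset_Icc_self ht₀) (Ioo_subset_Icc_self ht))
    have hgφt : IntervalIntegrable (fun s => g s * φ s) volume t₀ t :=
      hgφ.mono_set (by
        rw [uIcc_of_le hT]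
        exact Set.ordConnected_Icc.uIcc_subset (Ioo_subset_Icc_self ht₀) (Ioo_subset_Icc_self ht))
    have e1 : (∫ s in t₀..t, g s * (φ t - φ s))
        = (∫ s in t₀..t, g s) * φ t - ∫ s in t₀..t, g s * φ s := by
      have : (fun s => g s * (φ t - φ s)) = fun s => g s * φ t - g s * φ s := by
        funext s; ring
      rw [this, intervalIntegral.integral_sub (hgt.mul_const _) hgφt,
        intervalIntegral.integral_mul_const]
    have e2 : (∫ s in t₀..t, g s) = (∫ s in (0:ℝ)..t, g s) - ∫ s in (0:ℝ)..t₀, g s :=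
      (intervalIntegral.integral_interval_sub_left hg0t hg0t₀).symm
    have e3 : (∫ s in t₀..t, g s * φ s)
        = (∫ s in (0:ℝ)..t, g s * φ s) - ∫ s in (0:ℝ)..t₀, g s * φ s :=
      (intervalIntegral.integral_interval_sub_left hgφ0t hgφ0t₀).symm
    simp only [hGdef, smul_eq_mul, e1, e2, e3]
    ring
  have hGφ'int : IntervalIntegrable (fun t => G t * φ' t) volume 0 T := by
    apply ContinuousOn.intervalIntegrable
    rw [uIcc_of_le hT]
    exact hGcont.mul hφ'.continuousOn
  have hFTC := intervalIntegral.integral_eq_sub_of_hasDerivAt_of_le hT hDcont hD hGφ'int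
  rw [intervalIntegral.integral_add hgφ hGφ'int, hFTC]
  simp [hGdef, intervalIntegral.integral_same]
  ring

end Aux

section Vec

lemma intervalIntegrable_apply_coord {n : ℕ} {a b : ℝ} {g : ℝ → Fin n → ℝ}
    (hg : IntervalIntegrable g volume a b) (i : Fin n) :
    IntervalIntegrable (fun t => g t i) volume a b :=
  ⟨(ContinuousLinearMap.proj (R := ℝ) (φ := fun _ : Fin n => ℝ) i).integrable_comp hg.1,
   (ContinuousLinearMap.proj (R := ℝ) (φ := fun _ : Fin n => ℝ) i).integrable_comp hg.2⟩

lemma intervalIntegral_apply_coord {n : ℕ} {a b : ℝ} {g : ℝ → Fin n → ℝ}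
    (hg : IntervalIntegrable g volume a b) (i : Fin n) :
    (∫ s in a..b, g s) i = ∫ s in a..b, g s i :=
  ((ContinuousLinearMap.proj (R := ℝ) (φ := fun _ : Fin n => ℝ) i).intervalIntegral_comp_comm
    hg).symm

lemma continuousOn_dot {n : ℕ} {f g : ℝ → Fin n → ℝ} {s : Set ℝ}
    (hf : ContinuousOn f s) (hg : ContinuousOn g s) :
    ContinuousOn (fun t => f t ⬝ᵥ g t) s := by
  simp only [dotProduct]
  exact continuousOn_finset_sum _ fun i _ =>
    ((continuous_apply i).comp_continuousOn hf).mul ((continuous_apply i).comp_continuousOn hg)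

lemma intervalIntegrable_dot {n : ℕ} {a b : ℝ} {g φ : ℝ → Fin n → ℝ}
    (hg : IntervalIntegrable g volume a b) (hφ : Continuous φ) :
    IntervalIntegrable (fun t => g t ⬝ᵥ φ t) volume a b := by
  have := IntervalIntegrable.sum (μ := volume) (a := a) (b := b) Finset.univ
    (f := fun (i : Fin n) => fun t => g t i * φ t i)
    (fun i _ => (intervalIntegrable_apply_coord hg i).mul_continuousOn
      ((continuous_apply i).comp hφ).continuousOn)
  have heq : (∑ i : Fin n, fun t => g t i * φ t i) = fun t => g t ⬝ᵥ φ t := by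
    funext t; simp [dotProduct]
  rwa [heq] at this

lemma ibp_vec {n : ℕ} (T : ℝ) (hT : 0 ≤ T) (c : Fin n → ℝ) (g φ φ' : ℝ → Fin n → ℝ)
    (hg : IntervalIntegrable g volume 0 T)
    (hφ : ∀ t, HasDerivAt φ (φ' t) t) (hφ' : Continuous φ') :
    (c + ∫ s in (0:ℝ)..T, g s) ⬝ᵥ φ T - c ⬝ᵥ φ 0
      = ∫ t in (0:ℝ)..T, (g t ⬝ᵥ φ t + (c + ∫ s in (0:ℝ)..t, g s) ⬝ᵥ φ' t) := by
  have hφc : Continuous φ := continuous_iff_continuousAt.2 fun t => (hφ t).continuousAt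
  have hint : ∀ i : Fin n, IntervalIntegrable
      (fun t => g t i * φ t i + (c i + ∫ s in (0:ℝ)..t, g s i) * φ' t i) volume 0 T := by
    intro i
    refine ((intervalIntegrable_apply_coord hg i).mul_continuousOn
      ((continuous_apply i).comp hφc).continuousOn).add ?_
    apply ContinuousOn.intervalIntegrable
    exact (continuousOn_const.add (intervalIntegral.continuousOn_primitive_interval'
      (intervalIntegrable_apply_coord hg i) left_mem_uIcc)).mul
      ((continuous_apply i).comp hφ').continuousOn
  calc (c + ∫ s in (0:ℝ)..T, g s) ⬝ᵥ φ T - c ⬝ᵥ φ 0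
      = ∑ i : Fin n, ((c i + ∫ s in (0:ℝ)..T, g s i) * φ T i - c i * φ 0 i) := by
        simp [dotProduct, Finset.sum_sub_distrib, intervalIntegral_apply_coord hg]
    _ = ∑ i : Fin n, ∫ t in (0:ℝ)..T,
          (g t i * φ t i + (c i + ∫ s in (0:ℝ)..t, g s i) * φ' t i) := by
        refine Finset.sum_congr rfl fun i _ => ?_
        exact ibp_scalar T hT (c i) (fun t => g t i) (fun t => φ t i) (fun t => φ' t i)
          (intervalIntegrable_apply_coord hg i) (fun t => (hasDerivAt_pi.1 (hφ t)) i)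
          ((continuous_apply i).comp hφ')
    _ = ∫ t in (0:ℝ)..T, ∑ i : Fin n,
          (g t i * φ t i + (c i + ∫ s in (0:ℝ)..t, g s i) * φ' t i) :=
        (intervalIntegral.integral_finset_sum fun i _ => hint i).symm
    _ = ∫ t in (0:ℝ)..T, (g t ⬝ᵥ φ t + (c + ∫ s in (0:ℝ)..t, g s) ⬝ᵥ φ' t) := by
        apply intervalIntegral.integral_congr
        intro t ht
        have hg0t : IntervalIntegrable g volume 0 t :=
          hg.mono_set (Set.uIcc_subset_uIcc left_mem_uIcc ht)
        simp [dotProduct, Finset.sum_add_distrib, intervalIntegral_apply_coord hg0t,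
          Finset.mul_sum, Pi.add_apply]

lemma ftc_dot {n : ℕ} {T : ℝ} {f f' g g' : ℝ → Fin n → ℝ}
    (hf : ∀ t, HasDerivAt f (f' t) t) (hg : ∀ t, HasDerivAt g (g' t) t)
    (hint : IntervalIntegrable (fun t => f' t ⬝ᵥ g t + f t ⬝ᵥ g' t) volume 0 T) :
    f T ⬝ᵥ g T - f 0 ⬝ᵥ g 0 = ∫ t in (0:ℝ)..T, (f' t ⬝ᵥ g t + f t ⬝ᵥ g' t) := by
  refine (intervalIntegral.integral_eq_sub_of_hasDerivAt (f := fun τ => f τ ⬝ᵥ g τ)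
    (f' := fun τ => f' τ ⬝ᵥ g τ + f τ ⬝ᵥ g' τ) (fun t _ => ?_) hint).symm
  have h2 : f' t ⬝ᵥ g t + f t ⬝ᵥ g' t = ∑ i : Fin n, (f' t i * g t i + f t i * g' t i) := by
    simp [dotProduct, Finset.sum_add_distrib]
  rw [h2]
  have h1 : HasDerivAt (fun τ => ∑ i : Fin n, f τ i * g τ i)
      (∑ i : Fin n, (f' t i * g t i + f t i * g' t i)) t :=
    HasDerivAt.fun_sum fun i _ => ((hasDerivAt_pi.1 (hf t)) i).mul ((hasDerivAt_pi.1 (hg t)) i)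
  exact h1

end Vec

lemma deriv_facts {n : ℕ} {x : ℝ → Fin n → ℝ}
    (h : ∀ j < 2, Differentiable ℝ (iteratedDeriv j x)) :
    (∀ t, HasDerivAt x (iteratedDeriv 1 x t) t) ∧
      (∀ t, HasDerivAt (iteratedDeriv 1 x) (iteratedDeriv 2 x t) t) := by
  have h0 := h 0 (by norm_num)
  have h1 := h 1 (by norm_num)
  rw [iteratedDeriv_zero] at h0
  constructor
  · intro t; rw [iteratedDeriv_one]; exact (h0 t).hasDerivAt
  · intro t
    have h2 : iteratedDeriv 2 x = deriv (iteratedDeriv 1 x) := iteratedDeriv_succ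
    rw [h2]
    exact (h1 t).hasDerivAt

/-- A feasible pair `(x, u)` (with `v = x'''`) for the third-order linear problem (PTL). -/
def IsFeasiblePTL (n r : ℕ) (T : ℝ)
    (A : Matrix (Fin n) (Fin n) ℝ) (B : Matrix (Fin n) (Fin r) ℝ)
    (U : Set (Fin r → ℝ))
    (S : Set ((Fin n → ℝ) × (Fin n → ℝ)))
    (X : ℝ → Set (Fin n → ℝ))
    (x : ℝ → (Fin n → ℝ)) (u : ℝ → (Fin r → ℝ)) (v : ℝ → (Fin n → ℝ)) : Prop :=
  Measurable u ∧ (∀ t ∈ Icc (0:ℝ) T, u t ∈ U) ∧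
  (∀ j < 2, Differentiable ℝ (iteratedDeriv j x)) ∧
  IntervalIntegrable v volume 0 T ∧
  (∀ t ∈ Icc (0:ℝ) T,
      iteratedDeriv 2 x t = iteratedDeriv 2 x 0 + ∫ s in (0:ℝ)..t, v s) ∧
  (∀ᵐ t ∂volume, t ∈ Icc (0:ℝ) T → v t = A *ᵥ x t + B *ᵥ u t) ∧
  (∀ j < 3, (iteratedDeriv j x 0, iteratedDeriv j x T) ∈ S) ∧
  (∀ t ∈ Icc (0:ℝ) T, x t ∈ X t)

/-- Theorem 3.2: sufficient optimality condition for the third-order linear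
control problem (PTL). -/
theorem sufficient_optimality_third_order_linear
    (n r : ℕ) (hn : 1 ≤ n) (hr : 1 ≤ r) (T : ℝ) (hT : 0 < T)
    (A : Matrix (Fin n) (Fin n) ℝ) (B : Matrix (Fin n) (Fin r) ℝ)
    (U : Set (Fin r → ℝ)) (hUne : U.Nonempty) (hUconv : Convex ℝ U) (hUcomp : IsCompact U)
    (S : Set ((Fin n → ℝ) × (Fin n → ℝ)))
    (X : ℝ → Set (Fin n → ℝ))
    (f : (Fin n → ℝ) → (Fin n → ℝ) → ℝ)
    (hf : ConvexOn ℝ univ (fun p : (Fin n → ℝ) × (Fin n → ℝ) => f p.1 p.2))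
    (hS : Convex ℝ S)
    (hX : ∀ t ∈ Icc (0:ℝ) T, Convex ℝ (X t))
    -- the reference feasible pair (x̃, ũ) with ṽ = x̃'''
    (xt : ℝ → (Fin n → ℝ)) (ut : ℝ → (Fin r → ℝ)) (vt : ℝ → (Fin n → ℝ))
    (hfeas : IsFeasiblePTL n r T A B U S X xt ut vt)
    -- the adjoint arc x* (twice differentiable, with x*''' represented by w)
    (xs w : ℝ → (Fin n → ℝ))
    (hxsdiff : ∀ j < 2, Differentiable ℝ (iteratedDeriv j xs))
    (hw : IntervalIntegrable w volume 0 T)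
    (hxs : ∀ t ∈ Icc (0:ℝ) T,
      iteratedDeriv 2 xs t = iteratedDeriv 2 xs 0 + ∫ s in (0:ℝ)..t, w s)
    (vs : ℝ → (Fin n → ℝ))
    -- adjoint equation, state dual-cone condition and the maximum principle, a.e. on [0,T]
    (hae : ∀ᵐ t ∂volume, t ∈ Icc (0:ℝ) T →
      (∀ y ∈ X t, 0 ≤ (y - xt t) ⬝ᵥ vs t) ∧
      (-w t = Aᵀ *ᵥ xs t + vs t) ∧
      ((B *ᵥ ut t) ⬝ᵥ xs t = sSup {c : ℝ | ∃ u' ∈ U, c = (B *ᵥ u') ⬝ᵥ xs t}))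
    -- transversality at (x̃(0), x̃(T))
    (hc : ∃ p₀ p₁ μ₀ μ₁ : Fin n → ℝ,
      (∀ y₀ y₁, f (xt 0) (xt T) + (p₀ ⬝ᵥ (y₀ - xt 0) + p₁ ⬝ᵥ (y₁ - xt T)) ≤ f y₀ y₁) ∧
      (∀ s ∈ S, 0 ≤ (s.1 - xt 0) ⬝ᵥ μ₀ + (s.2 - xt T) ⬝ᵥ μ₁) ∧
      iteratedDeriv 2 xs 0 = p₀ - μ₀ ∧ -(iteratedDeriv 2 xs T) = p₁ - μ₁)
    -- remaining transversality conditions, j = 0, 1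
    (hd : ∀ j < 2, ∀ s ∈ S,
      0 ≤ (s.1 - iteratedDeriv (2-j) xt 0) ⬝ᵥ ((-1:ℝ)^(j+1) • iteratedDeriv j xs 0)
        + (s.2 - iteratedDeriv (2-j) xt T) ⬝ᵥ ((-1:ℝ)^j • iteratedDeriv j xs T)) :
    ∀ x u v, IsFeasiblePTL n r T A B U S X x u v →
      f (xt 0) (xt T) ≤ f (x 0) (x T) := by
  intro x u v hxf
  obtain ⟨hu_meas, hu_mem, hxdiff, hvint, hx2rep, hv_ae, hxS, hxX⟩ := hxf
  obtain ⟨hut_meas, hut_mem, hxtdiff, hvtint, hxt2rep, hvt_ae, hxtS, hxtX⟩ := hfeas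
  obtain ⟨p₀, p₁, μ₀, μ₁, hcp, hcμ, hc0, hcT⟩ := hc
  have hT' : (0:ℝ) ≤ T := hT.le
  have hmemT : T ∈ Icc (0:ℝ) T := ⟨hT', le_rfl⟩
  have hmem0 : (0:ℝ) ∈ Icc (0:ℝ) T := ⟨le_rfl, hT'⟩
  obtain ⟨hx_d, hx1_d⟩ := deriv_facts hxdiff
  obtain ⟨hxt_d, hxt1_d⟩ := deriv_facts hxtdiff
  obtain ⟨hxs_d, hxs1_d⟩ := deriv_facts hxsdiff
  -- continuity facts
  have cxs : Continuous xs := continuous_iff_continuousAt.2 fun t => (hxs_d t).continuousAt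
  have cxs1 : Continuous (iteratedDeriv 1 xs) :=
    continuous_iff_continuousAt.2 fun t => (hxs1_d t).continuousAt
  have ch : Continuous (fun t => x t - xt t) :=
    (continuous_iff_continuousAt.2 fun t => (hx_d t).continuousAt).sub
      (continuous_iff_continuousAt.2 fun t => (hxt_d t).continuousAt)
  have ch1 : Continuous (fun t => iteratedDeriv 1 x t - iteratedDeriv 1 xt t) :=
    (continuous_iff_continuousAt.2 fun t => (hx1_d t).continuousAt).sub
      (continuous_iff_continuousAt.2 fun t => (hxt1_d t).continuousAt)
  have cxs2 : ContinuousOn (iteratedDeriv 2 xs) (Icc 0 T) := by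
    have h1 : ContinuousOn (fun t => iteratedDeriv 2 xs 0 + ∫ s in (0:ℝ)..t, w s) (Icc 0 T) := by
      have h2 := intervalIntegral.continuousOn_primitive_interval' hw
        (left_mem_uIcc (a := (0:ℝ)) (b := T))
      rw [uIcc_of_le hT'] at h2
      exact continuousOn_const.add h2
    exact h1.congr fun t ht => hxs t ht
  have cx2 : ContinuousOn (iteratedDeriv 2 x) (Icc 0 T) := by
    have h1 : ContinuousOn (fun t => iteratedDeriv 2 x 0 + ∫ s in (0:ℝ)..t, v s) (Icc 0 T) := by
      have h2 := intervalIntegral.continuousOn_primitive_interval' hvint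
        (left_mem_uIcc (a := (0:ℝ)) (b := T))
      rw [uIcc_of_le hT'] at h2
      exact continuousOn_const.add h2
    exact h1.congr fun t ht => hx2rep t ht
  have cxt2 : ContinuousOn (iteratedDeriv 2 xt) (Icc 0 T) := by
    have h1 : ContinuousOn (fun t => iteratedDeriv 2 xt 0 + ∫ s in (0:ℝ)..t, vt s) (Icc 0 T) := by
      have h2 := intervalIntegral.continuousOn_primitive_interval' hvtint
        (left_mem_uIcc (a := (0:ℝ)) (b := T))
      rw [uIcc_of_le hT'] at h2
      exact continuousOn_const.add h2
    exact h1.congr fun t ht => hxt2rep t ht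
  have ch2 : ContinuousOn (fun t => iteratedDeriv 2 x t - iteratedDeriv 2 xt t) (Icc 0 T) :=
    cx2.sub cxt2
  -- the three integration-by-parts identities
  have A1 : iteratedDeriv 2 xs T ⬝ᵥ (x T - xt T) - iteratedDeriv 2 xs 0 ⬝ᵥ (x 0 - xt 0)
      = ∫ t in (0:ℝ)..T, (w t ⬝ᵥ (x t - xt t)
          + iteratedDeriv 2 xs t ⬝ᵥ (iteratedDeriv 1 x t - iteratedDeriv 1 xt t)) := by
    have H := ibp_vec T hT' (iteratedDeriv 2 xs 0) w (fun t => x t - xt t)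
      (fun t => iteratedDeriv 1 x t - iteratedDeriv 1 xt t) hw
      (fun t => (hx_d t).sub (hxt_d t)) ch1
    rw [← hxs T hmemT] at H
    rw [H]
    apply intervalIntegral.integral_congr
    intro t ht
    rw [uIcc_of_le hT'] at ht
    simp only []
    rw [← hxs t ht]
  have A2 : (iteratedDeriv 2 x T - iteratedDeriv 2 xt T) ⬝ᵥ xs T
        - (iteratedDeriv 2 x 0 - iteratedDeriv 2 xt 0) ⬝ᵥ xs 0
      = ∫ t in (0:ℝ)..T, ((v t - vt t) ⬝ᵥ xs t
          + (iteratedDeriv 2 x t - iteratedDeriv 2 xt t) ⬝ᵥ iteratedDeriv 1 xs t) := by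
    have H := ibp_vec T hT' (iteratedDeriv 2 x 0 - iteratedDeriv 2 xt 0)
      (fun t => v t - vt t) xs (iteratedDeriv 1 xs) (hvint.sub hvtint) hxs_d cxs1
    have hb : (iteratedDeriv 2 x 0 - iteratedDeriv 2 xt 0) + ∫ s in (0:ℝ)..T, (v s - vt s)
        = iteratedDeriv 2 x T - iteratedDeriv 2 xt T := by
      rw [intervalIntegral.integral_sub hvint hvtint, hx2rep T hmemT, hxt2rep T hmemT]
      abel
    rw [hb] at H
    rw [H]
    apply intervalIntegral.integral_congr
    intro t ht
    rw [uIcc_of_le hT'] at ht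
    simp only []
    have hsub : uIcc (0:ℝ) t ⊆ uIcc (0:ℝ) T := by
      rw [uIcc_of_le hT']
      exact Set.ordConnected_Icc.uIcc_subset hmem0 ht
    have hbt : (iteratedDeriv 2 x 0 - iteratedDeriv 2 xt 0) + ∫ s in (0:ℝ)..t, (v s - vt s)
        = iteratedDeriv 2 x t - iteratedDeriv 2 xt t := by
      rw [intervalIntegral.integral_sub (hvint.mono_set hsub) (hvtint.mono_set hsub),
        hx2rep t ht, hxt2rep t ht]
      abel
    rw [hbt]
  have i3 : IntervalIntegrable (fun t =>
      iteratedDeriv 2 xs t ⬝ᵥ (iteratedDeriv 1 x t - iteratedDeriv 1 xt t)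
      + iteratedDeriv 1 xs t ⬝ᵥ (iteratedDeriv 2 x t - iteratedDeriv 2 xt t)) volume 0 T := by
    apply ContinuousOn.intervalIntegrable
    rw [uIcc_of_le hT']
    exact (continuousOn_dot cxs2 ch1.continuousOn).add
      (continuousOn_dot cxs1.continuousOn ch2)
  have A3 : iteratedDeriv 1 xs T ⬝ᵥ (iteratedDeriv 1 x T - iteratedDeriv 1 xt T)
        - iteratedDeriv 1 xs 0 ⬝ᵥ (iteratedDeriv 1 x 0 - iteratedDeriv 1 xt 0)
      = ∫ t in (0:ℝ)..T, (iteratedDeriv 2 xs t ⬝ᵥ (iteratedDeriv 1 x t - iteratedDeriv 1 xt t)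
          + iteratedDeriv 1 xs t ⬝ᵥ (iteratedDeriv 2 x t - iteratedDeriv 2 xt t)) :=
    ftc_dot hxs1_d (fun t => (hx1_d t).sub (hxt1_d t)) i3
  -- integrability of the three integrands
  have i1 : IntervalIntegrable (fun t => w t ⬝ᵥ (x t - xt t)
      + iteratedDeriv 2 xs t ⬝ᵥ (iteratedDeriv 1 x t - iteratedDeriv 1 xt t)) volume 0 T := by
    refine (intervalIntegrable_dot hw ch).add ?_
    apply ContinuousOn.intervalIntegrable
    rw [uIcc_of_le hT']
    exact continuousOn_dot cxs2 ch1.continuousOn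
  have i2 : IntervalIntegrable (fun t => (v t - vt t) ⬝ᵥ xs t
      + (iteratedDeriv 2 x t - iteratedDeriv 2 xt t) ⬝ᵥ iteratedDeriv 1 xs t) volume 0 T := by
    refine (intervalIntegrable_dot (hvint.sub hvtint) cxs).add ?_
    apply ContinuousOn.intervalIntegrable
    rw [uIcc_of_le hT']
    exact continuousOn_dot ch2 cxs1.continuousOn
  -- combined identity
  have comb : (iteratedDeriv 2 xs T ⬝ᵥ (x T - xt T) - iteratedDeriv 2 xs 0 ⬝ᵥ (x 0 - xt 0))
      - (iteratedDeriv 1 xs T ⬝ᵥ (iteratedDeriv 1 x T - iteratedDeriv 1 xt T)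
        - iteratedDeriv 1 xs 0 ⬝ᵥ (iteratedDeriv 1 x 0 - iteratedDeriv 1 xt 0))
      + ((iteratedDeriv 2 x T - iteratedDeriv 2 xt T) ⬝ᵥ xs T
        - (iteratedDeriv 2 x 0 - iteratedDeriv 2 xt 0) ⬝ᵥ xs 0)
      = ∫ t in (0:ℝ)..T, (w t ⬝ᵥ (x t - xt t) + (v t - vt t) ⬝ᵥ xs t) := by
    rw [A1, A3, A2, ← intervalIntegral.integral_sub i1 i3,
      ← intervalIntegral.integral_add (i1.sub i3) i2]
    apply intervalIntegral.integral_congr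
    intro t _
    simp only []
    have hcomm : iteratedDeriv 1 xs t ⬝ᵥ (iteratedDeriv 2 x t - iteratedDeriv 2 xt t)
        = (iteratedDeriv 2 x t - iteratedDeriv 2 xt t) ⬝ᵥ iteratedDeriv 1 xs t :=
      dotProduct_comm _ _
    rw [hcomm]; ring
  -- the integrand is a.e. nonpositive
  have hneg : (∫ t in (0:ℝ)..T, (w t ⬝ᵥ (x t - xt t) + (v t - vt t) ⬝ᵥ xs t)) ≤ 0 := by
    have hnn : 0 ≤ ∫ t in (0:ℝ)..T, (-(w t ⬝ᵥ (x t - xt t) + (v t - vt t) ⬝ᵥ xs t)) := by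
      apply intervalIntegral.integral_nonneg_of_ae_restrict hT'
      refine (ae_restrict_iff' measurableSet_Icc).2 ?_
      filter_upwards [hae, hv_ae, hvt_ae] with t h₁ h₂ h₃
      intro ht
      simp only [Pi.zero_apply]
      obtain ⟨hXd, hadj, hsup⟩ := h₁ ht
      have hv' := h₂ ht
      have hvt' := h₃ ht
      have hwt : w t = -(Aᵀ *ᵥ xs t + vs t) := by rw [← hadj, neg_neg]
      have e1 : w t ⬝ᵥ (x t - xt t)
          = -((Aᵀ *ᵥ xs t) ⬝ᵥ (x t - xt t)) - vs t ⬝ᵥ (x t - xt t) := by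
        rw [hwt]
        simp [neg_dotProduct, add_dotProduct]
        ring
      have e2 : (Aᵀ *ᵥ xs t) ⬝ᵥ (x t - xt t) = xs t ⬝ᵥ (A *ᵥ (x t - xt t)) := by
        rw [Matrix.mulVec_transpose, ← Matrix.dotProduct_mulVec]
      have e3 : v t - vt t = A *ᵥ (x t - xt t) + (B *ᵥ u t - B *ᵥ ut t) := by
        rw [hv', hvt', Matrix.mulVec_sub]
        abel
      have e4 : (v t - vt t) ⬝ᵥ xs t = xs t ⬝ᵥ (A *ᵥ (x t - xt t))
          + ((B *ᵥ u t) ⬝ᵥ xs t - (B *ᵥ ut t) ⬝ᵥ xs t) := by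
        rw [e3, add_dotProduct, sub_dotProduct,
          dotProduct_comm (A *ᵥ (x t - xt t)) (xs t)]
      have e5 : 0 ≤ (x t - xt t) ⬝ᵥ vs t := hXd (x t) (hxX t ht)
      have e7 : vs t ⬝ᵥ (x t - xt t) = (x t - xt t) ⬝ᵥ vs t := dotProduct_comm _ _
      have e6 : (B *ᵥ u t) ⬝ᵥ xs t ≤ (B *ᵥ ut t) ⬝ᵥ xs t := by
        rw [hsup]
        have hcont : Continuous fun u' : Fin r → ℝ => (B *ᵥ u') ⬝ᵥ xs t := by
          simp only [dotProduct, Matrix.mulVec]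
          exact continuous_finset_sum _ fun i _ =>
            ((continuous_finset_sum _ fun j _ =>
              (continuous_const.mul (continuous_apply j))).mul continuous_const)
        have himg : {c : ℝ | ∃ u' ∈ U, c = (B *ᵥ u') ⬝ᵥ xs t}
            = (fun u' => (B *ᵥ u') ⬝ᵥ xs t) '' U := by
          ext c; simp [eq_comm]
        apply le_csSup
        · rw [himg]; exact (hUcomp.image hcont).bddAbove
        · exact ⟨u t, hu_mem t ht, rfl⟩
      linarith [e1, e2, e4, e5, e6, e7]
    rw [intervalIntegral.integral_neg] at hnn
    linarith
  -- the transversality inequalities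
  have EE : (iteratedDeriv 2 xs T ⬝ᵥ (x T - xt T) - iteratedDeriv 2 xs 0 ⬝ᵥ (x 0 - xt 0))
      - (iteratedDeriv 1 xs T ⬝ᵥ (iteratedDeriv 1 x T - iteratedDeriv 1 xt T)
        - iteratedDeriv 1 xs 0 ⬝ᵥ (iteratedDeriv 1 x 0 - iteratedDeriv 1 xt 0))
      + ((iteratedDeriv 2 x T - iteratedDeriv 2 xt T) ⬝ᵥ xs T
        - (iteratedDeriv 2 x 0 - iteratedDeriv 2 xt 0) ⬝ᵥ xs 0) ≤ 0 := by
    rw [comb]; exact hneg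
  have hd1 := hd 1 (by norm_num) (iteratedDeriv 1 x 0, iteratedDeriv 1 x T)
    (hxS 1 (by norm_num))
  have hd0 := hd 0 (by norm_num) (iteratedDeriv 2 x 0, iteratedDeriv 2 x T)
    (hxS 2 (by norm_num))
  norm_num [dotProduct_smul, smul_eq_mul, dotProduct_neg] at hd1 hd0
  have hμ : 0 ≤ (x 0 - xt 0) ⬝ᵥ μ₀ + (x T - xt T) ⬝ᵥ μ₁ := by
    have h0 := hxS 0 (by norm_num)
    rw [iteratedDeriv_zero] at h0
    exact hcμ (x 0, x T) h0
  have hp := hcp (x 0) (x T)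
  have q0 : iteratedDeriv 2 xs 0 ⬝ᵥ (x 0 - xt 0)
      = p₀ ⬝ᵥ (x 0 - xt 0) - (x 0 - xt 0) ⬝ᵥ μ₀ := by
    rw [hc0, sub_dotProduct, dotProduct_comm μ₀]
  have qT : iteratedDeriv 2 xs T ⬝ᵥ (x T - xt T)
      = (x T - xt T) ⬝ᵥ μ₁ - p₁ ⬝ᵥ (x T - xt T) := by
    have hxsT : iteratedDeriv 2 xs T = μ₁ - p₁ := by
      have h1 := neg_eq_iff_eq_neg.1 hcT
      rw [h1, neg_sub]
    rw [hxsT, sub_dotProduct, dotProduct_comm μ₁, dotProduct_comm p₁]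
  -- commutation facts to line up with hd0/hd1
  have E10 : iteratedDeriv 1 xs 0 ⬝ᵥ (iteratedDeriv 1 x 0 - iteratedDeriv 1 xt 0)
      = deriv x 0 ⬝ᵥ deriv xs 0 - deriv xt 0 ⬝ᵥ deriv xs 0 := by
    simp only [iteratedDeriv_one]
    rw [dotProduct_sub, dotProduct_comm (deriv xs 0) (deriv x 0),
      dotProduct_comm (deriv xs 0) (deriv xt 0)]
  have E1T : iteratedDeriv 1 xs T ⬝ᵥ (iteratedDeriv 1 x T - iteratedDeriv 1 xt T)
      = deriv x T ⬝ᵥ deriv xs T - deriv xt T ⬝ᵥ deriv xs T := by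
    simp only [iteratedDeriv_one]
    rw [dotProduct_sub, dotProduct_comm (deriv xs T) (deriv x T),
      dotProduct_comm (deriv xs T) (deriv xt T)]
  have E20 : (iteratedDeriv 2 x 0 - iteratedDeriv 2 xt 0) ⬝ᵥ xs 0
      = iteratedDeriv 2 x 0 ⬝ᵥ xs 0 - iteratedDeriv 2 xt 0 ⬝ᵥ xs 0 :=
    sub_dotProduct _ _ _
  have E2T : (iteratedDeriv 2 x T - iteratedDeriv 2 xt T) ⬝ᵥ xs T
      = iteratedDeriv 2 x T ⬝ᵥ xs T - iteratedDeriv 2 xt T ⬝ᵥ xs T :=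
    sub_dotProduct _ _ _
  linarith [EE, hd1, hd0, hμ, hp, q0, qT, E10, E1T, E20, E2T]
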